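/- The function δ ↦ δ·Φ(−δ) on [0, ∞) attains its maximum at a unique point δ* > 0, where Φ denotes the standard normal cumulative distribution function. Moreover δ* satisfies the first-order condition Φ(−δ*) = δ*·φ(δ*), where φ(x) = (2π)^{−1/2} e^{−x²/2} is the standard normal density. -/

import Mathlib

/-- The standard normal cumulative distribution function
`Φ(x) = ∫_{−∞}^{x} (2π)^{−1/2} e^{−t²/2} dt`. -/
noncomputable def stdNormalCDF (x : ℝ) : ℝ :=
  ∫ t in Set.Iic x, (Real.sqrt (2 * Real.pi))⁻¹ * Real.exp (-(t ^ 2) / 2)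

/-- The standard normal density `φ(x) = (2π)^{−1/2} e^{−x²/2}`. -/
noncomputable def stdNormalPDF (x : ℝ) : ℝ :=
  (Real.sqrt (2 * Real.pi))⁻¹ * Real.exp (-(x ^ 2) / 2)

open Real MeasureTheory Set Filter Topology

lemma pdf_pos (x : ℝ) : 0 < stdNormalPDF x := by
  have h : 0 < Real.sqrt (2 * Real.pi) := Real.sqrt_pos.mpr (by positivity)
  unfold stdNormalPDF; positivity

lemma pdf_cont : Continuous stdNormalPDF := by
  unfold stdNormalPDF; fun_prop

lemma pdf_even (x : ℝ) : stdNormalPDF (-x) = stdNormalPDF x := by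
  unfold stdNormalPDF; ring_nf

lemma pdf_integrable : Integrable stdNormalPDF := by
  have := (integrable_exp_neg_mul_sq (by norm_num : (0:ℝ) < 1/2)).const_mul
    (Real.sqrt (2 * Real.pi))⁻¹
  convert this using 2 with x
  unfold stdNormalPDF
  ring_nf

lemma cdf_eq (x : ℝ) : stdNormalCDF x = ∫ t in Set.Iic x, stdNormalPDF t := rfl

lemma hasDerivAt_cdf (x : ℝ) : HasDerivAt stdNormalCDF (stdNormalPDF x) x := by
  have key : ∀ y : ℝ, stdNormalCDF y = stdNormalCDF 0 + ∫ t in (0:ℝ)..y, stdNormalPDF t := by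
    intro y
    rw [← intervalIntegral.integral_Iic_sub_Iic pdf_integrable.integrableOn
      pdf_integrable.integrableOn, cdf_eq, cdf_eq]
    ring
  have h := intervalIntegral.integral_hasDerivAt_right (a := 0) (b := x)
    (pdf_integrable.intervalIntegrable)
    (pdf_cont.stronglyMeasurable.stronglyMeasurableAtFilter)
    pdf_cont.continuousAt
  have h2 := h.const_add (stdNormalCDF 0)
  rw [show stdNormalCDF = _ from funext key]
  exact h2

lemma hasDerivAt_pdf (x : ℝ) : HasDerivAt stdNormalPDF (-x * stdNormalPDF x) x := by
  have h1 : HasDerivAt (fun x : ℝ => -(x ^ 2) / 2) (-x) x := by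
    have := ((hasDerivAt_pow 2 x).neg).div_const 2
    simpa using this.congr_deriv (by ring)
  have h2 := (h1.exp).const_mul (Real.sqrt (2 * Real.pi))⁻¹
  unfold stdNormalPDF
  exact h2.congr_deriv (by ring)

lemma pdf_tendsto_zero : Tendsto stdNormalPDF atTop (𝓝 0) := by
  have h1 : Tendsto (fun x : ℝ => -(x ^ 2) / 2) atTop atBot := by
    apply Tendsto.atBot_div_const (by norm_num : (0:ℝ) < 2)
    exact tendsto_neg_atBot_iff.mpr (tendsto_pow_atTop two_ne_zero)
  have h2 := (Real.tendsto_exp_atBot.comp h1).const_mul (Real.sqrt (2 * Real.pi))⁻¹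
  rw [mul_zero] at h2
  exact h2.congr fun x => rfl

lemma mul_pdf_integrableOn (a : ℝ) :
    IntegrableOn (fun t => t * stdNormalPDF t) (Set.Ioi a) := by
  have := ((integrable_mul_exp_neg_mul_sq (by norm_num : (0:ℝ) < 1/2)).const_mul
    (Real.sqrt (2 * Real.pi))⁻¹)
  apply Integrable.integrableOn
  convert this using 2 with t
  unfold stdNormalPDF
  ring_nf

lemma tail_integral (a : ℝ) :
    ∫ t in Set.Ioi a, t * stdNormalPDF t = stdNormalPDF a := by
  have hderiv : ∀ x ∈ Set.Ici a, HasDerivAt (fun t => -stdNormalPDF t)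
      (x * stdNormalPDF x) x := by
    intro x _
    exact (hasDerivAt_pdf x).neg.congr_deriv (by ring)
  have ht : Tendsto (fun t => -stdNormalPDF t) atTop (𝓝 0) := by
    simpa using pdf_tendsto_zero.neg
  have := integral_Ioi_of_hasDerivAt_of_tendsto' hderiv (mul_pdf_integrableOn a) ht
  rw [this]; ring

lemma cdf_neg_eq (a : ℝ) :
    stdNormalCDF (-a) = ∫ t in Set.Ioi a, stdNormalPDF t := by
  rw [cdf_eq, ← integral_comp_neg_Ioi]
  simp_rw [pdf_even]

lemma cdf_neg_pos (a : ℝ) : 0 < stdNormalCDF (-a) := by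
  rw [cdf_neg_eq]
  rw [setIntegral_pos_iff_support_of_nonneg_ae]
  · have : Function.support stdNormalPDF = Set.univ := by
      ext x; simp [(pdf_pos x).ne']
    simp [this]
  · exact Filter.Eventually.of_forall fun x => (pdf_pos x).le
  · exact pdf_integrable.integrableOn

lemma tail_bound {a : ℝ} (ha : 0 < a) :
    a * stdNormalCDF (-a) ≤ stdNormalPDF a := by
  rw [cdf_neg_eq, ← integral_const_mul, ← tail_integral a]
  apply setIntegral_mono_on
  · exact (pdf_integrable.integrableOn).const_mul a
  · exact mul_pdf_integrableOn a
  · exact measurableSet_Ioi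
  · intro t ht
    exact mul_le_mul_of_nonneg_right (le_of_lt ht) (pdf_pos t).le

noncomputable def gAux (δ : ℝ) : ℝ := stdNormalCDF (-δ) - δ * stdNormalPDF δ

lemma hasDerivAt_cdf_neg (δ : ℝ) :
    HasDerivAt (fun δ : ℝ => stdNormalCDF (-δ)) (-stdNormalPDF δ) δ := by
  have h := (hasDerivAt_cdf (-δ)).comp δ (hasDerivAt_neg δ)
  have he : stdNormalPDF (-δ) * (-1) = -stdNormalPDF δ := by rw [pdf_even]; ring
  exact he ▸ h

lemma hasDerivAt_f (δ : ℝ) :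
    HasDerivAt (fun δ : ℝ => δ * stdNormalCDF (-δ)) (gAux δ) δ := by
  have h := (hasDerivAt_id δ).mul (hasDerivAt_cdf_neg δ)
  exact h.congr_deriv (by unfold gAux; simp only [id_eq]; ring)

lemma f_cont : Continuous (fun δ : ℝ => δ * stdNormalCDF (-δ)) :=
  continuous_iff_continuousAt.mpr fun x => (hasDerivAt_f x).continuousAt

lemma hasDerivAt_g (δ : ℝ) :
    HasDerivAt gAux ((δ ^ 2 - 2) * stdNormalPDF δ) δ := by
  have h := (hasDerivAt_cdf_neg δ).sub ((hasDerivAt_id δ).mul (hasDerivAt_pdf δ))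
  exact h.congr_deriv (by simp only [id_eq]; ring)

lemma g_cont : Continuous gAux :=
  continuous_iff_continuousAt.mpr fun x => (hasDerivAt_g x).continuousAt

lemma g_zero_pos : 0 < gAux 0 := by
  have := cdf_neg_pos 0
  unfold gAux
  simpa using this

lemma g_neg_of_one_lt {a : ℝ} (ha : 1 < a) : gAux a < 0 := by
  have h := tail_bound (by linarith : (0:ℝ) < a)
  have h1 := cdf_neg_pos a
  have h2 := pdf_pos a
  unfold gAux
  nlinarith

lemma g_strictAntiOn : StrictAntiOn gAux (Set.Icc 0 (Real.sqrt 2)) := by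
  apply strictAntiOn_of_deriv_neg (convex_Icc _ _) g_cont.continuousOn
  intro x hx
  rw [interior_Icc] at hx
  rw [(hasDerivAt_g x).deriv]
  have hx2 : x ^ 2 < 2 := by
    have := hx.2
    nlinarith [Real.sq_sqrt (by norm_num : (2:ℝ) ≥ 0), hx.1, Real.sqrt_nonneg 2]
  nlinarith [pdf_pos x]

lemma sqrt2_mem : (1:ℝ) < Real.sqrt 2 := by
  nlinarith [Real.sq_sqrt (by norm_num : (2:ℝ) ≥ 0), Real.sqrt_nonneg 2]

/-- The function `δ ↦ δ·Φ(−δ)` on `[0, ∞)` attains its maximum at a unique point `δ* > 0`,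
which satisfies the first-order condition `Φ(−δ*) = δ*·φ(δ*)`. -/
theorem exists_unique_argmax_mul_stdNormalCDF_neg :
    ∃ d : ℝ, 0 < d ∧
      IsMaxOn (fun δ : ℝ => δ * stdNormalCDF (-δ)) (Set.Ici 0) d ∧
      stdNormalCDF (-d) = d * stdNormalPDF d ∧
      ∀ d' ∈ Set.Ici (0 : ℝ),
        IsMaxOn (fun δ : ℝ => δ * stdNormalCDF (-δ)) (Set.Ici 0) d' → d' = d := by
  set f : ℝ → ℝ := fun δ => δ * stdNormalCDF (-δ) with hf
  -- root of gAux
  have hs2 : (0:ℝ) ≤ Real.sqrt 2 := Real.sqrt_nonneg 2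
  have hgs2 : gAux (Real.sqrt 2) < 0 := g_neg_of_one_lt sqrt2_mem
  obtain ⟨d, hdmem, hgd⟩ : ∃ d ∈ Set.Icc 0 (Real.sqrt 2), gAux d = 0 := by
    have h := intermediate_value_Icc' hs2 g_cont.continuousOn
    have h0 : (0:ℝ) ∈ Set.Icc (gAux (Real.sqrt 2)) (gAux 0) :=
      ⟨hgs2.le, g_zero_pos.le⟩
    obtain ⟨d, hd, hd'⟩ := h h0
    exact ⟨d, hd, hd'⟩
  have hd0 : 0 < d := by
    rcases eq_or_lt_of_le hdmem.1 with h | h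
    · exfalso; rw [← h] at hgd; exact g_zero_pos.ne' hgd
    · exact h
  have hds2 : d < Real.sqrt 2 := by
    rcases eq_or_lt_of_le hdmem.2 with h | h
    · exfalso; rw [h] at hgd; exact hgs2.ne hgd
    · exact h
  -- gAux positive on [0,d), negative on (d,∞)
  have hgpos : ∀ x, 0 ≤ x → x < d → 0 < gAux x := by
    intro x hx hxd
    have := g_strictAntiOn ⟨hx, le_trans hxd.le hdmem.2⟩ hdmem hxd
    rwa [hgd] at this
  have hgneg : ∀ x, d < x → gAux x < 0 := by
    intro x hxd
    rcases le_or_gt x (Real.sqrt 2) with h | h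
    · have := g_strictAntiOn hdmem ⟨le_trans hd0.le hxd.le, h⟩ hxd
      rwa [hgd] at this
    · exact g_neg_of_one_lt (lt_trans sqrt2_mem h)
  -- f strictly monotone on [0,d], strictly antitone on [d,∞)
  have hmono : StrictMonoOn f (Set.Icc 0 d) := by
    apply strictMonoOn_of_deriv_pos (convex_Icc _ _) f_cont.continuousOn
    intro x hx
    rw [interior_Icc] at hx
    rw [(hasDerivAt_f x).deriv]
    exact hgpos x hx.1.le hx.2
  have hanti : StrictAntiOn f (Set.Ici d) := by
    apply strictAntiOn_of_deriv_neg (convex_Ici _) f_cont.continuousOn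
    intro x hx
    rw [interior_Ici] at hx
    rw [(hasDerivAt_f x).deriv]
    exact hgneg x hx
  have hmax : IsMaxOn f (Set.Ici 0) d := by
    intro x hx
    simp only [Set.mem_setOf_eq]
    rcases le_total x d with h | h
    · exact hmono.monotoneOn ⟨hx, h⟩ ⟨hd0.le, le_refl d⟩ h
    · exact hanti.antitoneOn (Set.self_mem_Ici) h h
  refine ⟨d, hd0, hmax, by unfold gAux at hgd; linarith, ?_⟩
  intro d' hd' hmax'
  have h1 : f d' ≤ f d := hmax hd'
  have h2 : f d ≤ f d' := hmax' (by exact hd0.le : d ∈ Set.Ici 0)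
  by_contra hne
  rcases lt_or_gt_of_ne hne with h | h
  · have := hmono ⟨hd', h.le⟩ ⟨hd0.le, le_refl d⟩ h
    linarith
  · have := hanti (Set.self_mem_Ici) (le_of_lt h : d ≤ d') h
    linarith
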